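/- For every positive integer k there exists a tree on 9k+2 vertices with at least 48^k maximal irredundant sets. Consequently the growth rate of the maximum number of maximal irredundant sets over trees of order n is at least 48^{1/9} ≈ 1.53746. -/

import Mathlib

/-- `S` is an irredundant set of `G` : every vertex of `S` has a private neighbor,
i.e. a vertex `u` whose closed neighborhood meets `S` exactly in `v`. -/
def Irredundant {V : Type*} (G : SimpleGraph V) (S : Set V) : Prop :=
  ∀ v ∈ S, ∃ u : V, (insert u (G.neighborSet u)) ∩ S = {v}

/-- a maximal irredundant set: an irredundant set not strictly contained in another
irredundant set. -/
def MaximalIrredundant {V : Type*} (G : SimpleGraph V) (S : Set V) : Prop :=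
  Irredundant G S ∧ ∀ S' : Set V, S ⊂ S' → ¬ Irredundant G S'

namespace Stmt15

def lp : Fin 9 → Fin 9 := ![0, 0, 0, 0, 0, 1, 2, 3, 4]
def LAdj (a b : Fin 9) : Prop := a ≠ b ∧ (lp a = b ∨ lp b = a)
instance : DecidableRel LAdj := fun a b => by unfold LAdj; infer_instance
def InCN (u x : Fin 9) : Prop := x = u ∨ LAdj u x
instance : DecidableRel InCN := fun a b => by unfold InCN; infer_instance
def LocalGood (L : Finset (Fin 9)) : Prop :=
  ∀ v ∈ L, ∃ u : Fin 9, u ≠ 0 ∧ ∀ x : Fin 9, (InCN u x ∧ x ∈ L ↔ x = v)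
instance : DecidablePred LocalGood := fun L => by unfold LocalGood; infer_instance
def LocalMax (L : Finset (Fin 9)) : Prop :=
  LocalGood L ∧ ∀ x : Fin 9, x ∉ L → ¬ LocalGood (insert x L)
instance : DecidablePred LocalMax := fun L => by unfold LocalMax; infer_instance

def configs : Fin 48 → Finset (Fin 9) := ![{0,1,2,3}, {0,1,2,4}, {0,1,2,7}, {0,1,2,8}, {0,1,3,4}, {0,1,3,6}, {0,1,3,8}, {0,1,4,6}, {0,1,4,7}, {0,1,6,7}, {0,1,6,8}, {0,1,7,8}, {0,2,3,4}, {0,2,3,5}, {0,2,3,8}, {0,2,4,5}, {0,2,4,7}, {0,2,5,7}, {0,2,5,8}, {0,2,7,8}, {0,3,4,5}, {0,3,4,6}, {0,3,5,6}, {0,3,5,8}, {0,3,6,8}, {0,4,5,6}, {0,4,5,7}, {0,4,6,7}, {0,5,6,7}, {0,5,6,8}, {0,5,7,8}, {0,6,7,8}, {1,2,3,4}, {1,2,3,8}, {1,2,4,7}, {1,2,7,8}, {1,3,4,6}, {1,3,6,8}, {1,4,6,7}, {1,6,7,8}, {2,3,4,5}, {2,3,5,8}, {2,4,5,7}, {2,5,7,8},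 {3,4,5,6}, {3,5,6,8}, {4,5,6,7}, {5,6,7,8}]

theorem configs_injective : Function.Injective configs := by decide
theorem configs_max : ∀ c : Fin 48, LocalMax (configs c) := by decide

def ptGraph {V : Type*} (p : V → V) : SimpleGraph V := SimpleGraph.fromRel (fun u v => p u = v)
lemma ptGraph_adj {V : Type*} {p : V → V} {u v : V} :
    (ptGraph p).Adj u v ↔ u ≠ v ∧ (p u = v ∨ p v = u) := Iff.rfl

abbrev W (k : ℕ) := Fin 2 ⊕ (Fin k × Fin 9)

def pa {k : ℕ} : W k → W k
  | .inl _ => .inl 0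
  | .inr (i, j) => if j = 0 then .inl 0 else .inr (i, lp j)

def G0 (k : ℕ) : SimpleGraph (W k) := ptGraph pa

lemma adj_inl_inr {k : ℕ} {t : Fin 2} {i : Fin k} {j : Fin 9} :
    (G0 k).Adj (.inl t) (.inr (i, j)) ↔ t = 0 ∧ j = 0 := by
  rw [G0, ptGraph_adj]
  by_cases hj : j = 0 <;> simp [pa, hj] <;> omega

lemma adj_inr_inl {k : ℕ} {t : Fin 2} {i : Fin k} {j : Fin 9} :
    (G0 k).Adj (.inr (i, j)) (.inl t) ↔ t = 0 ∧ j = 0 := by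
  rw [(G0 k).adj_comm]; exact adj_inl_inr

lemma adj_inl_inl {k : ℕ} {t t' : Fin 2} :
    (G0 k).Adj (.inl t) (.inl t') ↔ t ≠ t' := by
  rw [G0, ptGraph_adj]; simp [pa]; omega

lemma lp_aux : ∀ j j' : Fin 9, (j ≠ j' ∧ (lp j = j' ∨ lp j' = j)) ↔
    (j ≠ j' ∧ ((j ≠ 0 ∧ lp j = j') ∨ (j' ≠ 0 ∧ lp j' = j))) := by decide

lemma adj_inr_inr {k : ℕ} {i i' : Fin k} {j j' : Fin 9} :
    (G0 k).Adj (.inr (i, j)) (.inr (i', j')) ↔ i = i' ∧ LAdj j j' := by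
  rw [G0, ptGraph_adj, LAdj, lp_aux]
  by_cases hj : j = 0 <;> by_cases hj' : j' = 0 <;>
    simp [pa, hj, hj', Prod.ext_iff] <;> aesop

/-- the candidate maximal irredundant set -/
def gset {k : ℕ} (c : Fin k → Fin 48) : Set (W k) := fun x =>
  match x with
  | .inl t => t = 0
  | .inr (i, j) => j ∈ configs (c i)

lemma mem_gset_inl {k : ℕ} {c : Fin k → Fin 48} {t : Fin 2} :
    (Sum.inl t : W k) ∈ gset c ↔ t = 0 := Iff.rfl

lemma mem_gset_inr {k : ℕ} {c : Fin k → Fin 48} {i : Fin k} {j : Fin 9} :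
    (Sum.inr (i, j) : W k) ∈ gset c ↔ j ∈ configs (c i) := Iff.rfl

theorem gset_irred {k : ℕ} (c : Fin k → Fin 48) : Irredundant (G0 k) (gset c) := by
  rintro (t | ⟨i, j⟩) hv
  · -- v = inl t, so t = 0
    have ht : t = 0 := hv
    subst ht
    refine ⟨.inl 1, ?_⟩
    ext x
    simp only [Set.mem_inter_iff, Set.mem_insert_iff, SimpleGraph.mem_neighborSet,
      Set.mem_singleton_iff]
    obtain (t' | ⟨i', j'⟩) := x
    · rw [adj_inl_inl]
      constructor
      · rintro ⟨h1, h2⟩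
        rw [mem_gset_inl] at h2
        rw [h2]
      · rintro h
        injection h with h
        subst h
        exact ⟨Or.inr (by decide), hv⟩
    · rw [adj_inl_inr]
      simp
  · -- v = inr (i, j)
    rw [mem_gset_inr] at hv
    obtain ⟨u, hu0, hloc⟩ := ((configs_max (c i)).1) j hv
    refine ⟨.inr (i, u), ?_⟩
    ext x
    simp only [Set.mem_inter_iff, Set.mem_insert_iff, SimpleGraph.mem_neighborSet,
      Set.mem_singleton_iff]
    obtain (t' | ⟨i', j'⟩) := x
    · rw [adj_inr_inl]
      constructor
      · rintro ⟨h1 | h2, _⟩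
        · exact absurd h1 (by simp)
        · exact absurd h2.2 hu0
      · rintro h; exact absurd h (by simp)
    · rw [adj_inr_inr]
      by_cases hii : i' = i
      · subst hii
        constructor
        · rintro ⟨h1, h2⟩
          rw [mem_gset_inr] at h2
          have : InCN u j' ∧ j' ∈ configs (c i') := by
            refine ⟨?_, h2⟩
            rcases h1 with h1 | h1
            · injection h1 with h
              injection h with _ h
              exact Or.inl h
            · exact Or.inr h1.2
          rw [hloc j'] at this
          rw [this]
        · rintro h
          injection h with h
          injection h with h1 h2
          subst h2
          have := (hloc j').mpr rfl
          rcases this.1 with h | h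
          · exact ⟨Or.inl (by rw [h]), this.2⟩
          · exact ⟨Or.inr ⟨rfl, h⟩, this.2⟩
      · constructor
        · rintro ⟨h1 | h1, h2⟩
          · injection h1 with h
            injection h with h1' _
            exact absurd h1' hii
          · exact absurd h1.1 (fun e => hii e.symm)
        · rintro h
          injection h with h
          injection h with h1' _
          exact absurd h1' hii

end Stmt15

namespace Stmt15

theorem irred_mono {V : Type*} {G : SimpleGraph V} {S T : Set V} (hT : T ⊆ S)
    (h : Irredundant G S) : Irredundant G T := by
  intro v hv
  obtain ⟨u, hu⟩ := h v (hT hv)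
  refine ⟨u, Set.Subset.antisymm ?_ ?_⟩
  · intro y hy
    rw [← hu]
    exact ⟨hy.1, hT hy.2⟩
  · intro y hy
    rw [Set.mem_singleton_iff] at hy
    have hv' : v ∈ insert u (G.neighborSet u) ∩ S := hu ▸ rfl
    rw [hy]
    exact ⟨hv'.1, hv⟩

theorem gset_not_irred_insert {k : ℕ} (c : Fin k → Fin 48) (x : W k) (hx : x ∉ gset c) :
    ¬ Irredundant (G0 k) (insert x (gset c)) := by
  intro hirr
  obtain (t | ⟨i, j⟩) := x
  · -- x = inl t with t = 1
    have ht : t = 1 := by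
      rw [mem_gset_inl] at hx
      omega
    subst ht
    obtain ⟨u, hu⟩ := hirr (.inl 1) (Set.mem_insert _ _)
    have h0S : (Sum.inl 0 : W k) ∈ insert (Sum.inl 1 : W k) (gset c) := Or.inr rfl
    have hvmem : (Sum.inl 1 : W k) ∈ insert u ((G0 k).neighborSet u) := by
      have : (Sum.inl 1 : W k) ∈ insert u ((G0 k).neighborSet u) ∩ insert (Sum.inl 1) (gset c) :=
        hu ▸ rfl
      exact this.1
    rw [Set.mem_insert_iff, SimpleGraph.mem_neighborSet] at hvmem
    obtain (t' | ⟨i'', j''⟩) := u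
    · -- u = inl t' : then inl 0 is in the closed nbhd of u and in S', contradiction
      have h0mem : (Sum.inl 0 : W k) ∈ insert (Sum.inl t') ((G0 k).neighborSet (.inl t'))
          ∩ insert (Sum.inl 1) (gset c) := by
        refine ⟨?_, h0S⟩
        rw [Set.mem_insert_iff, SimpleGraph.mem_neighborSet]
        by_cases h : t' = 0
        · subst h; exact Or.inl rfl
        · exact Or.inr (adj_inl_inl.mpr h)
      rw [hu, Set.mem_singleton_iff] at h0mem
      exact absurd h0mem (by simp)
    · rcases hvmem with h | h
      · exact absurd h (by simp)
      · rw [adj_inr_inl] at h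
        exact absurd h.1 (by simp)
  · -- x = inr (i, j)
    rw [mem_gset_inr] at hx
    have hng : ¬ LocalGood (insert j (configs (c i))) := (configs_max (c i)).2 j hx
    unfold LocalGood at hng
    push_neg at hng
    obtain ⟨v', hv'L', hbad⟩ := hng
    have hv'S : (Sum.inr (i, v') : W k) ∈ insert (Sum.inr (i, j)) (gset c) := by
      rcases Finset.mem_insert.mp hv'L' with h | h
      · subst h; exact Or.inl rfl
      · exact Or.inr (mem_gset_inr.mpr h)
    obtain ⟨u, hu⟩ := hirr _ hv'S
    have h0S : (Sum.inl 0 : W k) ∈ insert (Sum.inr (i, j) : W k) (gset c) := Or.inr rfl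
    have hvmem : (Sum.inr (i, v') : W k) ∈ insert u ((G0 k).neighborSet u) := by
      have : (Sum.inr (i, v') : W k) ∈ insert u ((G0 k).neighborSet u)
          ∩ insert (Sum.inr (i, j)) (gset c) := hu ▸ rfl
      exact this.1
    rw [Set.mem_insert_iff, SimpleGraph.mem_neighborSet] at hvmem
    obtain (t' | ⟨i'', j''⟩) := u
    · -- u = inl t' : inl 0 in closed nbhd, contradiction
      have h0mem : (Sum.inl 0 : W k) ∈ insert (Sum.inl t') ((G0 k).neighborSet (.inl t'))
          ∩ insert (Sum.inr (i, j)) (gset c) := by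
        refine ⟨?_, h0S⟩
        rw [Set.mem_insert_iff, SimpleGraph.mem_neighborSet]
        by_cases h : t' = 0
        · subst h; exact Or.inl rfl
        · exact Or.inr (adj_inl_inl.mpr h)
      rw [hu, Set.mem_singleton_iff] at h0mem
      exact absurd h0mem (by simp)
    · -- u = inr (i'', j'')
      have hii : i'' = i := by
        rcases hvmem with h | h
        · injection h with h; injection h with h1 _; exact h1.symm
        · exact (adj_inr_inr.mp h).1
      subst hii
      by_cases hj0 : j'' = 0
      · -- center cannot be a private neighbor: inl 0 in its closed nbhd
        subst hj0
        have h0mem : (Sum.inl 0 : W k) ∈ insert (Sum.inr (i'', 0))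
            ((G0 k).neighborSet (.inr (i'', 0))) ∩ insert (Sum.inr (i'', j)) (gset c) := by
          refine ⟨?_, h0S⟩
          rw [Set.mem_insert_iff, SimpleGraph.mem_neighborSet]
          exact Or.inr (adj_inr_inl.mpr ⟨rfl, rfl⟩)
        rw [hu, Set.mem_singleton_iff] at h0mem
        exact absurd h0mem (by simp)
      · obtain ⟨xb, hxb⟩ := hbad j'' hj0
        have key := Set.ext_iff.mp hu (Sum.inr (i'', xb))
        rw [Set.mem_inter_iff, Set.mem_insert_iff, SimpleGraph.mem_neighborSet,
          Set.mem_singleton_iff] at key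
        have hiff : InCN j'' xb ∧ xb ∈ insert j (configs (c i'')) ↔ xb = v' := by
          constructor
          · rintro ⟨hcn, hmemL⟩
            have : (Sum.inr (i'', xb) : W k) = Sum.inr (i'', v') := by
              apply key.mp
              constructor
              · rcases hcn with h | h
                · exact Or.inl (by rw [h])
                · exact Or.inr (adj_inr_inr.mpr ⟨rfl, h⟩)
              · rcases Finset.mem_insert.mp hmemL with h | h
                · subst h; exact Or.inl rfl
                · exact Or.inr (mem_gset_inr.mpr h)
            simpa using this
          · rintro rfl
            have := key.mpr rfl
            obtain ⟨h1, h2⟩ := this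
            constructor
            · rcases h1 with h | h
              · injection h with h; injection h with _ h; exact Or.inl h
              · exact Or.inr (adj_inr_inr.mp h).2
            · rcases h2 with h | h
              · have hxj : xb = j := by
                  injection h with h'
                  injection h' with h1 h2
                exact hxj ▸ Finset.mem_insert_self _ _
              · exact Finset.mem_insert_of_mem (mem_gset_inr.mp h)
        rcases hxb with ⟨h12, h3⟩ | ⟨h1, h2⟩
        · exact h3 (hiff.mp h12)
        · obtain ⟨hin, hmem⟩ := hiff.mpr h2
          exact h1 hin hmem

theorem gset_maxirred {k : ℕ} (c : Fin k → Fin 48) :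
    MaximalIrredundant (G0 k) (gset c) := by
  refine ⟨gset_irred c, fun S' hss hirr' => ?_⟩
  obtain ⟨x, hxS', hx⟩ := Set.exists_of_ssubset hss
  exact gset_not_irred_insert c x hx
    (irred_mono (Set.insert_subset hxS' hss.1) hirr')

set_option linter.unusedSectionVars false
section PTree
variable {V : Type*} {p : V → V} {rk : V → ℕ} {root : V}
  (hroot : p root = root) (hrk : ∀ v, v ≠ root → rk (p v) < rk v)

section
include hroot hrk

lemma rk_p_le (v : V) : rk (p v) ≤ rk v := by
  by_cases h : v = root
  · subst h; rw [hroot]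
  · exact (hrk v h).le

lemma rk_iter_le (n : ℕ) (v : V) : rk (p^[n] v) ≤ rk v := by
  induction n generalizing v with
  | zero => simp
  | succ n ih =>
    rw [Function.iterate_succ_apply]
    exact (ih (p v)).trans (rk_p_le hroot hrk v)

lemma p_ne_self {v : V} (h : v ≠ root) : p v ≠ v :=
  fun e => absurd (e ▸ hrk v h) (lt_irrefl _)

lemma ptGraph_reachable (v : V) : (ptGraph p).Reachable v root := by
  have H : ∀ n (v : V), rk v ≤ n → (ptGraph p).Reachable v root := by
    intro n
    induction n with
    | zero =>
      intro v hv
      by_cases h : v = root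
      · exact h ▸ SimpleGraph.Reachable.refl _
      · exact absurd (lt_of_lt_of_le (hrk v h) hv) (Nat.not_lt_zero _)
    | succ n ih =>
      intro v hv
      by_cases h : v = root
      · exact h ▸ SimpleGraph.Reachable.refl _
      · have hadj : (ptGraph p).Adj v (p v) :=
          ⟨(p_ne_self hroot hrk h).symm, Or.inl rfl⟩
        exact hadj.reachable.trans (ih (p v) (by have := hrk v h; omega))
  exact H (rk v) v le_rfl

lemma ptGraph_connected [Nonempty V] : (ptGraph p).Connected := by
  rw [SimpleGraph.connected_iff_exists_forall_reachable]
  exact ⟨root, fun v => (ptGraph_reachable hroot hrk v).symm⟩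

/-- ancestor relation towards a fixed vertex v -/
private def anc (v x : V) : Prop := ∃ n, p^[n] x = v

lemma key_walk {v : V} (hv : v ≠ root) :
    ∀ {x y : V} (w : (ptGraph p).Walk x y), s(v, p v) ∉ w.edges → (anc (p := p) v x ↔ anc (p := p) v y) := by
  intro x y w
  induction w with
  | nil => intro _; rfl
  | @cons a b c hab w ih =>
    intro hmem
    rw [SimpleGraph.Walk.edges_cons, List.mem_cons] at hmem
    push_neg at hmem
    refine Iff.trans ?_ (ih hmem.2)
    -- edge a-b is not s(v, p v); show anc v a ↔ anc v b
    obtain ⟨hne, hab'⟩ := hab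
    have hedge : s(a, b) ≠ s(v, p v) := Ne.symm hmem.1
    have main : ∀ a b : V, a ≠ b → p a = b → s(a, b) ≠ s(v, p v) →
        (anc (p := p) v a ↔ anc (p := p) v b) := by
      intro a b hne hpa hedge
      have ha : a ≠ v := by
        rintro rfl
        exact hedge (by rw [hpa])
      constructor
      · rintro ⟨n, hn⟩
        cases n with
        | zero => exact absurd hn ha
        | succ n =>
          rw [Function.iterate_succ_apply, hpa] at hn
          exact ⟨n, hn⟩
      · rintro ⟨n, hn⟩
        exact ⟨n + 1, by rw [Function.iterate_succ_apply, hpa, hn]⟩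
    rcases hab' with h | h
    · exact main a b hne h hedge
    · exact (main b a (Ne.symm hne) h (by rwa [Sym2.eq_swap])).symm

lemma ptGraph_acyclic : (ptGraph p).IsAcyclic := by
  rw [SimpleGraph.isAcyclic_iff_forall_adj_isBridge]
  intro u w huw
  have main : ∀ v : V, v ≠ root → (ptGraph p).IsBridge s(v, p v) := by
    intro v hv
    rw [SimpleGraph.isBridge_iff_adj_and_forall_walk_mem_edges]
    have hadj : (ptGraph p).Adj v (p v) :=
      ⟨(p_ne_self hroot hrk hv).symm, Or.inl rfl⟩
    intro q
    by_contra hmem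
    have h1 : anc (p := p) v v := ⟨0, rfl⟩
    have h2 : ¬ anc (p := p) v (p v) := by
      rintro ⟨n, hn⟩
      have := rk_iter_le hroot hrk n (p v)
      rw [hn] at this
      exact absurd (lt_of_le_of_lt this (hrk v hv)) (lt_irrefl _)
    exact h2 ((key_walk hroot hrk hv q hmem).mp h1)
  obtain ⟨hne, h | h⟩ := huw
  · have hu : u ≠ root := by
      rintro rfl
      rw [hroot] at h
      exact hne h
    rw [← h]
    exact main u hu
  · have hw : w ≠ root := by
      rintro rfl
      rw [hroot] at h
      exact hne h.symm
    rw [Sym2.eq_swap, ← h]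
    exact main w hw

end


end PTree


/-! ### instantiation -/

def rk9 : Fin 9 → ℕ := ![1, 2, 2, 2, 2, 3, 3, 3, 3]

def rkW {k : ℕ} : W k → ℕ
  | .inl t => t.val
  | .inr (_, j) => rk9 j

lemma pa_root {k : ℕ} : pa (Sum.inl 0 : W k) = Sum.inl 0 := rfl

lemma rk9_lt : ∀ j : Fin 9, j ≠ 0 → rk9 (lp j) < rk9 j := by decide

lemma rkW_lt {k : ℕ} : ∀ v : W k, v ≠ Sum.inl 0 → rkW (pa v) < rkW v := by
  rintro (t | ⟨i, j⟩) hv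
  · have ht : t.val ≠ 0 := fun h => hv (by rw [show t = 0 from Fin.ext (by simpa using h)])
    have h1 : rkW (pa (Sum.inl t : W k)) = 0 := rfl
    rw [h1]
    show 0 < t.val
    omega
  · by_cases hj : j = 0
    · subst hj
      have h1 : pa (Sum.inr (i, 0) : W k) = Sum.inl 0 := rfl
      rw [h1]
      show (0 : Fin 2).val < rk9 0
      decide
    · have h1 : pa (Sum.inr (i, j) : W k) = Sum.inr (i, lp j) := by
        show (if j = 0 then (Sum.inl 0 : W k) else Sum.inr (i, lp j)) = Sum.inr (i, lp j)
        rw [if_neg hj]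
      rw [h1]
      exact rk9_lt j hj

theorem G0_connected (k : ℕ) : (G0 k).Connected :=
  ptGraph_connected pa_root rkW_lt

theorem G0_acyclic (k : ℕ) : (G0 k).IsAcyclic :=
  ptGraph_acyclic pa_root rkW_lt

theorem gset_injective {k : ℕ} : Function.Injective (gset (k := k)) := by
  intro c c' h
  funext i
  apply configs_injective
  ext j
  have := Set.ext_iff.mp h (Sum.inr (i, j))
  simpa [mem_gset_inr] using this

theorem card_lower (k : ℕ) :
    48 ^ k ≤ Nat.card {S : Set (W k) // MaximalIrredundant (G0 k) S} := by
  have hinj : Function.Injective (fun c : Fin k → Fin 48 =>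
      (⟨gset c, gset_maxirred c⟩ : {S : Set (W k) // MaximalIrredundant (G0 k) S})) := by
    intro c c' h
    exact gset_injective (congrArg Subtype.val h)
  calc 48 ^ k = Nat.card (Fin k → Fin 48) := by simp [Nat.card_fun]
  _ ≤ _ := Nat.card_le_card_of_injective _ hinj

/-! ### transport along an isomorphism -/

theorem irred_map {α β : Type*} {G : SimpleGraph α} {H : SimpleGraph β} (φ : G ≃g H)
    (S : Set α) (h : Irredundant G S) : Irredundant H (φ.toEquiv '' S) := by
  rintro v' ⟨v, hv, rfl⟩
  obtain ⟨u, hu⟩ := h v hv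
  refine ⟨φ.toEquiv u, ?_⟩
  ext y
  obtain ⟨x, rfl⟩ := φ.toEquiv.surjective y
  have key := Set.ext_iff.mp hu x
  simp only [Set.mem_inter_iff, Set.mem_insert_iff, SimpleGraph.mem_neighborSet,
    Set.mem_singleton_iff] at key ⊢
  rw [φ.toEquiv.apply_eq_iff_eq, φ.toEquiv.apply_eq_iff_eq]
  constructor
  · rintro ⟨h1, h2⟩
    apply key.mp
    refine ⟨?_, ?_⟩
    · rcases h1 with h1 | h1
      · exact Or.inl h1
      · exact Or.inr (φ.map_adj_iff.mp h1)
    · obtain ⟨z, hz, hze⟩ := h2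
      rwa [φ.toEquiv.apply_eq_iff_eq.mp hze] at hz
  · intro hxv
    obtain ⟨h1, h2⟩ := key.mpr hxv
    refine ⟨?_, ⟨x, h2, rfl⟩⟩
    rcases h1 with h1 | h1
    · exact Or.inl h1
    · exact Or.inr (φ.map_adj_iff.mpr h1)

theorem mi_map {α β : Type*} {G : SimpleGraph α} {H : SimpleGraph β} (φ : G ≃g H)
    (S : Set α) (h : MaximalIrredundant G S) : MaximalIrredundant H (φ.toEquiv '' S) := by
  refine ⟨irred_map φ S h.1, fun S' hss hirr' => ?_⟩
  have hsub : S ⊂ φ.toEquiv.symm '' S' := by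
    constructor
    · intro x hx
      exact ⟨φ.toEquiv x, hss.1 ⟨x, hx, rfl⟩, φ.toEquiv.symm_apply_apply x⟩
    · intro hcon
      obtain ⟨y, hyS', hy⟩ := Set.exists_of_ssubset hss
      apply hy
      have : φ.toEquiv.symm y ∈ S := hcon ⟨y, hyS', rfl⟩
      exact ⟨_, this, φ.toEquiv.apply_symm_apply y⟩
  apply h.2 _ hsub
  have := irred_map φ.symm S' hirr'
  convert this using 2
  rfl

noncomputable def miEquiv {α β : Type*} {G : SimpleGraph α} {H : SimpleGraph β} (φ : G ≃g H) :
    {S : Set α // MaximalIrredundant G S} ≃ {S : Set β // MaximalIrredundant H S} :=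
  Equiv.subtypeEquiv (Equiv.Set.congr φ.toEquiv) (by
    intro S
    constructor
    · intro h
      exact mi_map φ S h
    · intro h
      have := mi_map φ.symm _ h
      have he : φ.symm.toEquiv '' (Equiv.Set.congr φ.toEquiv S) = S := by
        show φ.toEquiv.symm '' (φ.toEquiv '' S) = S
        exact Equiv.symm_image_image _ _
      rwa [he] at this)

/-! ### the tree on `Fin (9k+2)` -/

noncomputable def eqv (k : ℕ) : W k ≃ Fin (9 * k + 2) :=
  Fintype.equivFinOfCardEq (by simp [mul_comm]; ring)

noncomputable def TG (k : ℕ) : SimpleGraph (Fin (9 * k + 2)) :=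
  (G0 k).comap ⇑(eqv k).symm.toEmbedding

noncomputable def TGiso (k : ℕ) : TG k ≃g G0 k := SimpleGraph.Iso.comap (eqv k).symm (G0 k)

theorem part1 (k : ℕ) :
    ∃ T : SimpleGraph (Fin (9 * k + 2)), T.Connected ∧ T.IsAcyclic ∧
      48 ^ k ≤ Nat.card {S : Set (Fin (9 * k + 2)) // MaximalIrredundant T S} := by
  refine ⟨TG k, ((TGiso k).connected_iff).mpr (G0_connected k), ?_, ?_⟩
  · intro v c hc
    exact G0_acyclic k (c.map (TGiso k).toHom) (hc.map (TGiso k).toEquiv.injective)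
  · have hcard : Nat.card {S : Set (Fin (9 * k + 2)) // MaximalIrredundant (TG k) S}
        = Nat.card {S : Set (W k) // MaximalIrredundant (G0 k) S} :=
      Nat.card_congr (miEquiv (TGiso k))
    rw [hcard]
    exact card_lower k

end Stmt15

namespace Stmt15

def Mset (n : ℕ) : Set ℕ :=
  {m : ℕ | ∃ T : SimpleGraph (Fin n), T.Connected ∧ T.IsAcyclic ∧
    m = Nat.card {S : Set (Fin n) // MaximalIrredundant T S}}

noncomputable def fseq (n : ℕ) : ℝ := ((sSup (Mset n) : ℕ) : ℝ) ^ ((1 : ℝ) / n)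

lemma mset_bdd (n : ℕ) : ∀ m ∈ Mset n, m ≤ 2 ^ n := by
  rintro m ⟨T, _, _, rfl⟩
  calc Nat.card {S : Set (Fin n) // MaximalIrredundant T S}
      ≤ Nat.card (Set (Fin n)) := Nat.card_le_card_of_injective _ Subtype.val_injective
  _ = 2 ^ n := by rw [Nat.card_eq_fintype_card, Fintype.card_set, Fintype.card_fin]

lemma sSup_mset_le (n : ℕ) : sSup (Mset n) ≤ 2 ^ n := by
  rcases Set.eq_empty_or_nonempty (Mset n) with h | h
  · rw [h, csSup_empty]
    exact Nat.zero_le _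
  · exact csSup_le h (mset_bdd n)

lemma fseq_le (n : ℕ) : fseq n ≤ 2 := by
  by_cases hn : n = 0
  · subst hn
    simp [fseq]
  · have h1 : ((sSup (Mset n) : ℕ) : ℝ) ≤ ((2 : ℝ) ^ n) := by
      exact_mod_cast sSup_mset_le n
    have h2 : fseq n ≤ ((2 : ℝ) ^ n) ^ ((1 : ℝ) / n) :=
      Real.rpow_le_rpow (Nat.cast_nonneg _) h1 (by positivity)
    calc fseq n ≤ ((2 : ℝ) ^ n) ^ ((1 : ℝ) / n) := h2
    _ = 2 := by
        rw [← Real.rpow_natCast 2 n, ← Real.rpow_mul (by norm_num)]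
        rw [mul_one_div, div_self (Nat.cast_ne_zero.mpr hn), Real.rpow_one]

lemma fseq_bddAbove : Filter.IsBoundedUnder (· ≤ ·) Filter.atTop fseq :=
  Filter.isBoundedUnder_of ⟨2, fseq_le⟩

lemma fseq_lb (k : ℕ) : (48 : ℝ) ^ ((k : ℝ) / (9 * k + 2)) ≤ fseq (9 * k + 2) := by
  obtain ⟨T, hc, ha, hcard⟩ := part1 k
  have hmem : Nat.card {S : Set (Fin (9 * k + 2)) // MaximalIrredundant T S} ∈ Mset (9 * k + 2) :=
    ⟨T, hc, ha, rfl⟩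
  have h1 : 48 ^ k ≤ sSup (Mset (9 * k + 2)) :=
    le_trans hcard (le_csSup ⟨2 ^ (9 * k + 2), mset_bdd _⟩ hmem)
  have h2 : ((48 : ℝ)) ^ k ≤ ((sSup (Mset (9 * k + 2)) : ℕ) : ℝ) := by exact_mod_cast h1
  have h3 : ((48 : ℝ) ^ k) ^ ((1 : ℝ) / ((9 * k + 2 : ℕ) : ℝ)) ≤ fseq (9 * k + 2) :=
    Real.rpow_le_rpow (by positivity) h2 (by positivity)
  calc (48 : ℝ) ^ ((k : ℝ) / (9 * k + 2))
      = ((48 : ℝ) ^ k) ^ ((1 : ℝ) / ((9 * k + 2 : ℕ) : ℝ)) := by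
        rw [← Real.rpow_natCast 48 k, ← Real.rpow_mul (by norm_num)]
        congr 1
        push_cast
        ring
  _ ≤ _ := h3

lemma exp_tendsto : Filter.Tendsto (fun k : ℕ => (48 : ℝ) ^ ((k : ℝ) / (9 * k + 2)))
    Filter.atTop (nhds ((48 : ℝ) ^ ((1 : ℝ) / 9))) := by
  apply Filter.Tendsto.rpow tendsto_const_nhds ?_ (Or.inl (by norm_num))
  have h0 : Filter.Tendsto (fun k : ℕ => (2 : ℝ) / k) Filter.atTop (nhds 0) :=
    tendsto_const_div_atTop_nhds_zero_nat 2
  have h9 : Filter.Tendsto (fun k : ℕ => 9 + (2 : ℝ) / k) Filter.atTop (nhds 9) := by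
    simpa using tendsto_const_nhds.add h0
  have hinv : Filter.Tendsto (fun k : ℕ => 1 / (9 + (2 : ℝ) / k)) Filter.atTop (nhds (1 / 9)) :=
    tendsto_const_nhds.div h9 (by norm_num)
  apply hinv.congr'
  filter_upwards [Filter.eventually_ge_atTop 1] with k hk
  have hk0 : (k : ℝ) ≠ 0 := Nat.cast_ne_zero.mpr (by omega)
  field_simp

theorem part2 :
    (48 : ℝ) ^ ((1 : ℝ) / 9) ≤ Filter.atTop.limsup fseq := by
  apply le_of_forall_lt_imp_le_of_dense
  intro a ha
  have hev : ∀ᶠ k : ℕ in Filter.atTop, a ≤ (48 : ℝ) ^ ((k : ℝ) / (9 * k + 2)) :=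
    exp_tendsto.eventually (eventually_ge_nhds ha)
  have hev2 : ∀ᶠ k in Filter.atTop, a ≤ fseq (9 * k + 2) :=
    hev.mono fun k hk => hk.trans (fseq_lb k)
  have htend : Filter.Tendsto (fun k : ℕ => 9 * k + 2) Filter.atTop Filter.atTop :=
    Filter.tendsto_atTop_mono (fun k => by simp; omega) Filter.tendsto_id
  exact Filter.le_limsup_of_frequently_le (htend.frequently hev2.frequently) fseq_bddAbove

end Stmt15

theorem stmt_15 :
    (∀ k : ℕ, 0 < k → ∃ T : SimpleGraph (Fin (9 * k + 2)),
      T.Connected ∧ T.IsAcyclic ∧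
      48 ^ k ≤ Nat.card {S : Set (Fin (9 * k + 2)) // MaximalIrredundant T S}) ∧
    (48 : ℝ) ^ ((1 : ℝ) / 9) ≤
      Filter.atTop.limsup (fun n : ℕ =>
        ((sSup {m : ℕ | ∃ T : SimpleGraph (Fin n), T.Connected ∧ T.IsAcyclic ∧
          m = Nat.card {S : Set (Fin n) // MaximalIrredundant T S}} : ℕ) : ℝ) ^
            ((1 : ℝ) / n)) := by
  exact ⟨fun k _ => Stmt15.part1 k, Stmt15.part2⟩
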